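/- Let I ≥ 2, let F_I be a saturated fraction of the I × I design, and regard F_I as a subset F_I' of Fin (I+1) × Fin (I+1) via the embedding (Fin.castSucc, Fin.castSucc) on both coordinates. Let E be a finset of Fin (I+1) × Fin (I+1) disjoint from F_I', and set F_{I+1} = F_I' ∪ E. Then F_{I+1} is a saturated fraction of the (I+1) × (I+1) design if and only if: card E = 2, every point of E has first coordinate equal to the last level (Fin.last) or second coordinate equal to the last level, at least one point of F_{I+1} has first coordinate equal to the last level, and at least one point of F_{I+1} has second coordinate equal to the last level. -/

import Mathlib

/-- The model row of a design point `(i, j)` under the simple effect model: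
a `1` (for the grand mean), the indicators of the first `I - 1` row levels,
and the indicators of the first `J - 1` column levels. -/
def modelRow {I J : ℕ} (p : Fin I × Fin J) :
    ℝ × (Fin (I - 1) → ℝ) × (Fin (J - 1) → ℝ) :=
  (1,
   fun a => if (p.1 : ℕ) = (a : ℕ) then 1 else 0,
   fun b => if (p.2 : ℕ) = (b : ℕ) then 1 else 0)

open Module

lemma sum_indicator_aux (n m : ℕ) :
    (∑ k : Fin n, if m = (k : ℕ) then (1:ℝ) else 0) = if m < n then 1 else 0 := by
  rcases lt_or_ge m n with h | h
  · rw [if_pos h, Finset.sum_eq_single (⟨m, h⟩ : Fin n)]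
    · simp
    · intro k _ hk
      rw [if_neg]
      intro he; exact hk (by ext; simp [he.symm])
    · simp
  · rw [if_neg (not_lt.2 h)]
    apply Finset.sum_eq_zero
    intro k _
    rw [if_neg]
    have := k.isLt
    omega

/-- `x ↦ x.1 - ∑ first block`. -/
def sumFstAux (n m : ℕ) : (ℝ × (Fin n → ℝ) × (Fin m → ℝ)) →ₗ[ℝ] ℝ where
  toFun x := x.1 - ∑ k, x.2.1 k
  map_add' x y := by simp [Finset.sum_add_distrib]; ring
  map_smul' c x := by
    simp only [smul_eq_mul, RingHom.id_apply, Prod.smul_fst, Prod.smul_snd, Pi.smul_apply]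
    rw [mul_sub, Finset.mul_sum]

/-- `x ↦ x.1 - ∑ second block`. -/
def sumSndAux (n m : ℕ) : (ℝ × (Fin n → ℝ) × (Fin m → ℝ)) →ₗ[ℝ] ℝ where
  toFun x := x.1 - ∑ k, x.2.2 k
  map_add' x y := by simp [Finset.sum_add_distrib]; ring
  map_smul' c x := by
    simp only [smul_eq_mul, RingHom.id_apply, Prod.smul_fst, Prod.smul_snd, Pi.smul_apply]
    rw [mul_sub, Finset.mul_sum]

lemma sumFstAux_modelRow {I : ℕ} (p : Fin (I+1) × Fin (I+1)) :
    sumFstAux I I (modelRow p) = if p.1 = Fin.last I then 1 else 0 := by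
  have h1 : sumFstAux I I (modelRow p)
      = 1 - ∑ k : Fin I, if (p.1:ℕ) = (k:ℕ) then (1:ℝ) else 0 := rfl
  rw [h1, sum_indicator_aux]
  rcases eq_or_ne p.1 (Fin.last I) with h | h
  · simp [h]
  · have hlt : (p.1:ℕ) < I := Fin.val_lt_last h
    simp [h, hlt]

lemma sumSndAux_modelRow {I : ℕ} (p : Fin (I+1) × Fin (I+1)) :
    sumSndAux I I (modelRow p) = if p.2 = Fin.last I then 1 else 0 := by
  have h1 : sumSndAux I I (modelRow p)
      = 1 - ∑ k : Fin I, if (p.2:ℕ) = (k:ℕ) then (1:ℝ) else 0 := rfl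
  rw [h1, sum_indicator_aux]
  rcases eq_or_ne p.2 (Fin.last I) with h | h
  · simp [h]
  · have hlt : (p.2:ℕ) < I := Fin.val_lt_last h
    simp [h, hlt]

/-- Extension linear map from the `I × I` model space to the `(I+1) × (I+1)` one. -/
def extMapAux (n m : ℕ) :
    (ℝ × (Fin n → ℝ) × (Fin n → ℝ)) →ₗ[ℝ] (ℝ × (Fin m → ℝ) × (Fin m → ℝ)) where
  toFun x := (x.1,
    fun k => if h : (k:ℕ) < n then x.2.1 ⟨k, h⟩ else x.1 - ∑ j, x.2.1 j,
    fun k => if h : (k:ℕ) < n then x.2.2 ⟨k, h⟩ else x.1 - ∑ j, x.2.2 j)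
  map_add' x y := by
    refine Prod.ext rfl (Prod.ext (funext fun k => ?_) (funext fun k => ?_)) <;>
    · simp only [Prod.fst_add, Prod.snd_add, Pi.add_apply]
      split_ifs <;> simp [Finset.sum_add_distrib] <;> ring
  map_smul' c x := by
    refine Prod.ext rfl (Prod.ext (funext fun k => ?_) (funext fun k => ?_)) <;>
    · simp only [Prod.smul_fst, Prod.smul_snd, Pi.smul_apply, smul_eq_mul, RingHom.id_apply]
      split_ifs <;> simp [Finset.mul_sum, mul_sub]

lemma extMapAux_ker (n m : ℕ) (h : n ≤ m) : LinearMap.ker (extMapAux n m) = ⊥ := by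
  rw [LinearMap.ker_eq_bot']
  rintro ⟨c, a, b⟩ hx
  have h1 : c = 0 := congrArg Prod.fst hx
  refine Prod.ext h1 (Prod.ext (funext fun j => ?_) (funext fun j => ?_))
  · have h2 := congrFun (congrArg (fun z => z.2.1) hx) ⟨j, lt_of_lt_of_le j.isLt h⟩
    simpa [extMapAux, j.isLt] using h2
  · have h2 := congrFun (congrArg (fun z => z.2.2) hx) ⟨j, lt_of_lt_of_le j.isLt h⟩
    simpa [extMapAux, j.isLt] using h2

lemma extMapAux_modelRow {I : ℕ} (y : Fin I × Fin I) :
    extMapAux (I-1) I (modelRow y)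
      = modelRow (Fin.castSucc y.1, Fin.castSucc y.2) := by
  refine Prod.ext rfl (Prod.ext (funext fun k => ?_) (funext fun k => ?_))
  · show (if h : (k:ℕ) < I - 1 then (if (y.1:ℕ) = (k:ℕ) then (1:ℝ) else 0)
        else 1 - ∑ j : Fin (I-1), if (y.1:ℕ) = (j:ℕ) then (1:ℝ) else 0)
      = if (y.1:ℕ) = (k:ℕ) then 1 else 0
    rcases lt_or_ge (k:ℕ) (I-1) with h | h
    · rw [dif_pos h]
    · rw [dif_neg (not_lt.2 h), sum_indicator_aux]
      have hk : (k:ℕ) = I - 1 := by have := k.isLt; omega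
      have hy := y.1.isLt
      rcases lt_or_ge (y.1:ℕ) (I-1) with h2 | h2
      · rw [if_pos h2, if_neg (by omega)]; ring
      · rw [if_neg (not_lt.2 h2), if_pos (by omega)]; ring
  · show (if h : (k:ℕ) < I - 1 then (if (y.2:ℕ) = (k:ℕ) then (1:ℝ) else 0)
        else 1 - ∑ j : Fin (I-1), if (y.2:ℕ) = (j:ℕ) then (1:ℝ) else 0)
      = if (y.2:ℕ) = (k:ℕ) then 1 else 0
    rcases lt_or_ge (k:ℕ) (I-1) with h | h
    · rw [dif_pos h]
    · rw [dif_neg (not_lt.2 h), sum_indicator_aux]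
      have hk : (k:ℕ) = I - 1 := by have := k.isLt; omega
      have hy := y.2.isLt
      rcases lt_or_ge (y.2:ℕ) (I-1) with h2 | h2
      · rw [if_pos h2, if_neg (by omega)]; ring
      · rw [if_neg (not_lt.2 h2), if_pos (by omega)]; ring

lemma li_union_aux {V : Type*} [AddCommGroup V] [Module ℝ V] {ι : Type*} [DecidableEq ι]
    (s : Finset ι) (v : ι → V) (f g : V →ₗ[ℝ] ℝ)
    (hs : LinearIndependent ℝ (fun x : s => v x))
    (hf0 : ∀ x ∈ s, f (v x) = 0) (hg0 : ∀ x ∈ s, g (v x) = 0)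
    (p q : ι) (hp : p ∉ s) (hq : q ∉ s) (hpq : p ≠ q)
    (hdet : f (v p) * g (v q) - f (v q) * g (v p) ≠ 0) :
    LinearIndependent ℝ (fun x : ↥(s ∪ {p, q}) => v x) := by
  rw [Fintype.linearIndependent_iff]
  intro c hc
  have hmemp : p ∈ s ∪ ({p, q} : Finset ι) := by simp
  have hmemq : q ∈ s ∪ ({p, q} : Finset ι) := by simp
  set c' : ι → ℝ := fun i => if h : i ∈ s ∪ ({p, q} : Finset ι) then c ⟨i, h⟩ else 0 with hc'
  have hc'eq : ∀ (i : ↥(s ∪ ({p, q} : Finset ι))), c' i = c i := fun i => dif_pos i.2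
  have hdst : Disjoint s ({p, q} : Finset ι) := by
    simp only [Finset.disjoint_insert_right, Finset.disjoint_singleton_right]
    exact ⟨hp, hq⟩
  have hsum : ∑ i ∈ s, c' i • v i + (c' p • v p + c' q • v q) = 0 := by
    have h0 : ∑ i ∈ s ∪ ({p, q} : Finset ι), c' i • v i = 0 := by
      rw [← Finset.sum_coe_sort, ← hc]
      exact Finset.sum_congr rfl fun i _ => by rw [hc'eq]
    rw [Finset.sum_union hdst, Finset.sum_pair hpq] at h0
    exact h0
  have happ : ∀ h : V →ₗ[ℝ] ℝ, (∀ x ∈ s, h (v x) = 0) →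
      c' p * h (v p) + c' q * h (v q) = 0 := by
    intro h h0
    have := congrArg h hsum
    rw [map_zero, map_add, map_add, map_smul, map_smul, map_sum] at this
    have hz : ∑ i ∈ s, h (c' i • v i) = 0 :=
      Finset.sum_eq_zero fun i hi => by rw [map_smul, h0 i hi, smul_zero]
    rw [hz, zero_add, smul_eq_mul, smul_eq_mul] at this
    exact this
  have hf1 := happ f hf0
  have hg1 := happ g hg0
  have hp0 : c' p = 0 := by
    have h1 : c' p * (f (v p) * g (v q) - f (v q) * g (v p)) = 0 := by
      linear_combination g (v q) * hf1 - f (v q) * hg1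
    rcases mul_eq_zero.1 h1 with h | h
    · exact h
    · exact absurd h hdet
  have hq0 : c' q = 0 := by
    have h1 : c' q * (f (v p) * g (v q) - f (v q) * g (v p)) = 0 := by
      linear_combination f (v p) * hg1 - g (v p) * hf1
    rcases mul_eq_zero.1 h1 with h | h
    · exact h
    · exact absurd h hdet
  have hss : ∑ i : ↥s, c' ↑i • v ↑i = 0 := by
    rw [Finset.sum_coe_sort s (fun i => c' i • v i)]
    rw [hp0, hq0] at hsum
    simpa using hsum
  have hall := Fintype.linearIndependent_iff.1 hs (fun i => c' ↑i) hss
  intro i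
  rw [← hc'eq i]
  have hi := i.2
  rw [Finset.mem_union] at hi
  rcases hi with hi | hi
  · exact hall ⟨i, hi⟩
  · rw [Finset.mem_insert, Finset.mem_singleton] at hi
    rcases hi with hi | hi <;> rw [hi]
    exacts [hp0, hq0]

lemma card_bound_aux {V : Type*} [AddCommGroup V] [Module ℝ V] [FiniteDimensional ℝ V]
    {ι : Type*} [Fintype ι] (v : ι → V) (f : V →ₗ[ℝ] ℝ)
    (hli : LinearIndependent ℝ v) (h0 : ∀ i, f (v i) = 0)
    (x : V) (hx : f x ≠ 0) :
    Fintype.card ι + 1 ≤ finrank ℝ V := by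
  have hmem : ∀ i, v i ∈ LinearMap.ker f := fun i => h0 i
  have hw : LinearIndependent ℝ (fun i => (⟨v i, hmem i⟩ : LinearMap.ker f)) := by
    apply LinearIndependent.of_comp (LinearMap.ker f).subtype
    exact hli
  have h1 : Fintype.card ι ≤ finrank ℝ (LinearMap.ker f) :=
    hw.fintype_card_le_finrank
  have hsurj : LinearMap.range f = ⊤ := by
    rw [LinearMap.range_eq_top]
    intro r
    exact ⟨(r * (f x)⁻¹) • x, by rw [map_smul, smul_eq_mul]; field_simp⟩
  have h2 := LinearMap.finrank_range_add_finrank_ker f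
  rw [hsurj, finrank_top, finrank_self] at h2
  omega

lemma det_ne_aux {A B C D : Prop} [Decidable A] [Decidable B] [Decidable C] [Decidable D]
    (h1 : A ∨ B) (h2 : C ∨ D) (h3 : A ∨ C) (h4 : B ∨ D) (h5 : ¬(A ∧ B ∧ C ∧ D)) :
    (if A then (1:ℝ) else 0) * (if D then 1 else 0)
      - (if C then 1 else 0) * (if B then 1 else 0) ≠ 0 := by
  by_cases A <;> by_cases B <;> by_cases C <;> by_cases D <;> simp_all

/-- Extension of a saturated `I × I` fraction to the `(I+1) × (I+1)` design: embedding
the fraction via `Fin.castSucc` and adding a finset `E` of new points, the result is a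
saturated fraction of the `(I+1) × (I+1)` design if and only if `E` has exactly two
points, each lying in the last row or the last column, and the enlarged fraction meets
both the last row and the last column. -/
theorem saturated_extension_iff {I : ℕ} (hI : 2 ≤ I)
    (FI : Finset (Fin I × Fin I)) (hcard : FI.card = 2 * I - 1)
    (hsat : LinearIndependent ℝ (fun p : FI => modelRow p.1))
    (FI' E : Finset (Fin (I + 1) × Fin (I + 1)))
    (hFI' : FI' = FI.image (fun p => (Fin.castSucc p.1, Fin.castSucc p.2)))
    (hdisj : Disjoint FI' E) :
    ((FI' ∪ E).card = 2 * (I + 1) - 1 ∧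
      LinearIndependent ℝ (fun p : ↥(FI' ∪ E) => modelRow p.1)) ↔
    (E.card = 2 ∧
      (∀ p ∈ E, p.1 = Fin.last I ∨ p.2 = Fin.last I) ∧
      (∃ p ∈ FI' ∪ E, p.1 = Fin.last I) ∧
      (∃ p ∈ FI' ∪ E, p.2 = Fin.last I)) := by
  classical
  set emb : Fin I × Fin I → Fin (I+1) × Fin (I+1) :=
    fun y => (Fin.castSucc y.1, Fin.castSucc y.2) with hemb
  have hembinj : Function.Injective emb := by
    intro a b h
    simp only [hemb, Prod.mk.injEq, Fin.castSucc_inj] at h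
    exact Prod.ext h.1 h.2
  have hFI'card : FI'.card = 2 * I - 1 := by
    rw [hFI', Finset.card_image_of_injective _ hembinj, hcard]
  have hucard : (FI' ∪ E).card = FI'.card + E.card :=
    Finset.card_union_of_disjoint hdisj
  set ρ : Fin (I+1) → Fin I := fun k => ⟨min (k:ℕ) (I-1), by omega⟩ with hρdef
  have hρ : ∀ k : Fin (I+1), (k:ℕ) < I → Fin.castSucc (ρ k) = k := by
    intro k hk
    ext
    simp only [hρdef, Fin.coe_castSucc]
    omega
  set ψ : Fin (I+1) × Fin (I+1) → Fin I × Fin I := fun z => (ρ z.1, ρ z.2) with hψdef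
  have hψemb : ∀ z : Fin (I+1) × Fin (I+1), (z.1:ℕ) < I → (z.2:ℕ) < I →
      emb (ψ z) = z := by
    intro z h1 h2
    exact Prod.ext (hρ z.1 h1) (hρ z.2 h2)
  have hψ : ∀ y : Fin I × Fin I, ψ (emb y) = y := by
    intro y
    apply hembinj
    exact hψemb (emb y) (by simp [hemb]) (by simp [hemb])
  have hrow : ∀ y : Fin I × Fin I, modelRow (emb y) = extMapAux (I-1) I (modelRow y) := by
    intro y
    rw [extMapAux_modelRow]
  have hmemFI' : ∀ x ∈ FI', ∃ y ∈ FI, emb y = x := by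
    intro x hx
    rw [hFI'] at hx
    simpa [hemb] using Finset.mem_image.1 hx
  have hFI'ne : ∀ x ∈ FI', x.1 ≠ Fin.last I ∧ x.2 ≠ Fin.last I := by
    intro x hx
    obtain ⟨y, _, rfl⟩ := hmemFI' x hx
    exact ⟨(Fin.castSucc_lt_last y.1).ne, (Fin.castSucc_lt_last y.2).ne⟩
  have hφmem : ∀ x : ↥FI', ψ (x : Fin (I+1) × Fin (I+1)) ∈ FI := by
    intro x
    obtain ⟨y, hy, hyx⟩ := hmemFI' x.1 x.2
    rw [← hyx, hψ]
    exact hy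
  set φ : ↥FI' → ↥FI := fun x => ⟨ψ x.1, hφmem x⟩ with hφdef
  have hφinv : ∀ x : ↥FI', emb ((φ x) : Fin I × Fin I) = (x : Fin (I+1) × Fin (I+1)) := by
    intro x
    obtain ⟨y, _, hyx⟩ := hmemFI' x.1 x.2
    show emb (ψ x.1) = x.1
    rw [← hyx, hψ]
  have hφinj : Function.Injective φ := by
    intro a b h
    apply Subtype.ext
    rw [← hφinv a, ← hφinv b]
    exact congrArg emb (congrArg Subtype.val h)
  have hliFI' : LinearIndependent ℝ
      (fun x : ↥FI' => modelRow (x : Fin (I+1) × Fin (I+1))) := by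
    have h1 := (hsat.map' (extMapAux (I-1) I) (extMapAux_ker _ _ (by omega))).comp φ hφinj
    have h2 : ((⇑(extMapAux (I-1) I) ∘ fun p : ↥FI => modelRow p.1) ∘ φ)
        = fun x : ↥FI' => modelRow (x : Fin (I+1) × Fin (I+1)) := by
      funext x
      simp only [Function.comp_apply]
      rw [← hrow, hφinv x]
    rwa [h2] at h1
  have hfrV : finrank ℝ (ℝ × (Fin (I + 1 - 1) → ℝ) × (Fin (I + 1 - 1) → ℝ)) = 2 * I + 1 := by
    simp only [finrank_prod, finrank_pi, finrank_self, Fintype.card_fin]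
    omega
  constructor
  · rintro ⟨hc, hli⟩
    have hEcard : E.card = 2 := by omega
    refine ⟨hEcard, ?_, ?_, ?_⟩
    · -- every point of E is in the last row or column
      intro r hr
      by_contra hcon
      push_neg at hcon
      obtain ⟨hr1, hr2⟩ := hcon
      have hr1' : (r.1:ℕ) < I := Fin.val_lt_last hr1
      have hr2' : (r.2:ℕ) < I := Fin.val_lt_last hr2
      have hrψ : emb (ψ r) = r := hψemb r hr1' hr2'
      -- span of old rows is everything
      have hne : Nonempty ↥FI := by
        obtain ⟨w, hw⟩ := Finset.card_pos.mp (by omega : 0 < FI.card)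
        exact ⟨⟨w, hw⟩⟩
      have hfrOld : finrank ℝ (ℝ × (Fin (I-1) → ℝ) × (Fin (I-1) → ℝ)) = 2 * I - 1 := by
        simp only [finrank_prod, finrank_pi, finrank_self, Fintype.card_fin]
        omega
      have hspan : Submodule.span ℝ (Set.range (fun p : ↥FI => modelRow p.1)) = ⊤ :=
        hsat.span_eq_top_of_card_eq_finrank (by rw [Fintype.card_coe, hcard, hfrOld])
      -- modelRow r lies in the span of the FI' rows inside the big family
      set v : ↥(FI' ∪ E) → ℝ × (Fin I → ℝ) × (Fin I → ℝ) :=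
        fun x => modelRow (x : Fin (I+1) × Fin (I+1)) with hvdef
      set S : Set ↥(FI' ∪ E) := {x | (x : Fin (I+1) × Fin (I+1)) ∈ FI'} with hSdef
      have hmem1 : modelRow r ∈ Submodule.span ℝ (v '' S) := by
        have hx1 : modelRow (ψ r) ∈
            Submodule.span ℝ (Set.range (fun p : ↥FI => modelRow p.1)) := by
          rw [hspan]; exact Submodule.mem_top
        have hx2 : modelRow r ∈ Submodule.map (extMapAux (I-1) I)
            (Submodule.span ℝ (Set.range (fun p : ↥FI => modelRow p.1))) := by
          refine ⟨modelRow (ψ r), hx1, ?_⟩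
          rw [← hrow, hrψ]
        rw [Submodule.map_span] at hx2
        refine Submodule.span_mono ?_ hx2
        rintro z ⟨_, ⟨y, rfl⟩, rfl⟩
        have hyFI' : emb y.1 ∈ FI' := by
          rw [hFI']
          exact Finset.mem_image.2 ⟨y.1, y.2, rfl⟩
        refine ⟨⟨emb y.1, Finset.mem_union_left _ hyFI'⟩, hyFI', ?_⟩
        rw [hvdef]
        simp only
        rw [hrow]
      have hrE : r ∈ FI' ∪ E := Finset.mem_union_right _ hr
      have hrnot : (⟨r, hrE⟩ : ↥(FI' ∪ E)) ∉ S := by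
        intro hmem
        exact (Finset.disjoint_left.1 hdisj hmem) hr
      exact hli.notMem_span_image hrnot hmem1
    · -- some point in the last row
      by_contra h
      push_neg at h
      have hb := card_bound_aux (fun x : ↥(FI' ∪ E) => modelRow (x : Fin (I+1) × Fin (I+1)))
        (sumFstAux I I) hli
        (fun i => by
          show sumFstAux I I (modelRow (i : Fin (I+1) × Fin (I+1))) = 0
          rw [sumFstAux_modelRow, if_neg (h i.1 i.2)])
        ((1 : ℝ), 0, 0) (by simp [sumFstAux])
      rw [Fintype.card_coe, hc, hfrV] at hb
      omega
    · -- some point in the last column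
      by_contra h
      push_neg at h
      have hb := card_bound_aux (fun x : ↥(FI' ∪ E) => modelRow (x : Fin (I+1) × Fin (I+1)))
        (sumSndAux I I) hli
        (fun i => by
          show sumSndAux I I (modelRow (i : Fin (I+1) × Fin (I+1))) = 0
          rw [sumSndAux_modelRow, if_neg (h i.1 i.2)])
        ((1 : ℝ), 0, 0) (by simp [sumSndAux])
      rw [Fintype.card_coe, hc, hfrV] at hb
      omega
  · rintro ⟨hE2, hElast, ⟨a, ha, ha1⟩, ⟨b, hb, hb2⟩⟩
    have haE : a ∈ E := by
      rcases Finset.mem_union.1 ha with h | h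
      · exact absurd ha1 (hFI'ne a h).1
      · exact h
    have hbE : b ∈ E := by
      rcases Finset.mem_union.1 hb with h | h
      · exact absurd hb2 (hFI'ne b h).2
      · exact h
    constructor
    · omega
    · obtain ⟨p, q, hpq, hEpq⟩ := Finset.card_eq_two.1 hE2
      rw [hEpq]
      have hpE : p ∈ E := by rw [hEpq]; simp
      have hqE : q ∈ E := by rw [hEpq]; simp
      have hf0 : ∀ x ∈ FI', sumFstAux I I (modelRow x) = 0 := by
        intro x hx
        rw [sumFstAux_modelRow, if_neg (hFI'ne x hx).1]
      have hg0 : ∀ x ∈ FI', sumSndAux I I (modelRow x) = 0 := by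
        intro x hx
        rw [sumSndAux_modelRow, if_neg (hFI'ne x hx).2]
      have hdet : sumFstAux I I (modelRow p) * sumSndAux I I (modelRow q)
          - sumFstAux I I (modelRow q) * sumSndAux I I (modelRow p) ≠ 0 := by
        rw [sumFstAux_modelRow, sumFstAux_modelRow, sumSndAux_modelRow, sumSndAux_modelRow]
        apply det_ne_aux
        · exact hElast p hpE
        · exact hElast q hqE
        · -- A ∨ C from the point a in the last row
          have : a = p ∨ a = q := by
            have := haE
            rw [hEpq, Finset.mem_insert, Finset.mem_singleton] at this
            exact this
          rcases this with h | h
          · exact Or.inl (h ▸ ha1)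
          · exact Or.inr (h ▸ ha1)
        · have : b = p ∨ b = q := by
            have := hbE
            rw [hEpq, Finset.mem_insert, Finset.mem_singleton] at this
            exact this
          rcases this with h | h
          · exact Or.inl (h ▸ hb2)
          · exact Or.inr (h ▸ hb2)
        · rintro ⟨hA, hB, hC, hD⟩
          apply hpq
          refine Prod.ext ?_ ?_
          · rw [hA, hC]
          · rw [hB, hD]
      exact li_union_aux FI' (fun z => modelRow z) (sumFstAux I I) (sumSndAux I I)
        hliFI' hf0 hg0 p q
        (fun hmem => Finset.disjoint_left.1 hdisj hmem hpE)
        (fun hmem => Finset.disjoint_left.1 hdisj hmem hqE)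
        hpq hdet
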